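/- If the graph G_M(R) is disconnected, then V_M(R) is a disconnected step-graph; that is: |V_M(R)| > 1, no two distinct min-max nodes share a first coordinate or a second coordinate, and every min-max node v has at least one and at most two min-max nodes among its diagonals D(v). -/

import Mathlib

/-- Manhattan distance on the grid ℤ × ℤ. -/
def md (u v : ℤ × ℤ) : ℕ := (u.1 - v.1).natAbs + (u.2 - v.2).natAbs

/-- Eccentricity of a grid node with respect to the robot set `R`:
the maximum Manhattan distance from a robot of `R` to the node. -/
def ecc (R : Finset (ℤ × ℤ)) (v : ℤ × ℤ) : ℕ := R.sup (fun u => md u v)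

/-- `v` is a min-max node of `R`. -/
def IsMinMax (R : Finset (ℤ × ℤ)) (v : ℤ × ℤ) : Prop :=
  ∀ v' : ℤ × ℤ, ecc R v ≤ ecc R v'

/-- The subgraph `G_M(R)` of the infinite grid graph induced by the set of
min-max nodes of `R`: two min-max nodes are adjacent iff their Manhattan
distance is 1. -/
def GM (R : Finset (ℤ × ℤ)) : SimpleGraph {v : ℤ × ℤ // IsMinMax R v} where
  Adj u v := md u.val v.val = 1
  symm := by
    constructor
    intro u v h
    simp only [md] at h ⊢
    omega
  loopless := by
    constructor
    intro u h
    simp [md] at h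

/-- `u` is a diagonal of `v`. -/
def Diag (v u : ℤ × ℤ) : Prop :=
  (u.1 - v.1).natAbs = 1 ∧ (u.2 - v.2).natAbs = 1

/-- A set `S` of grid nodes is a disconnected step-graph: it has more than one
node, no two distinct nodes of `S` share a first or second coordinate, and every
node of `S` has at least one and at most two nodes of `S` among its diagonals. -/
def DisconnectedStepGraph (S : Set (ℤ × ℤ)) : Prop :=
  (∃ a ∈ S, ∃ b ∈ S, a ≠ b) ∧
  (∀ a ∈ S, ∀ b ∈ S, a ≠ b → a.1 ≠ b.1 ∧ a.2 ≠ b.2) ∧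
  (∀ a ∈ S, ∃ b ∈ S, Diag a b) ∧
  (∀ a ∈ S, ∀ b ∈ S, ∀ c ∈ S, ∀ d ∈ S,
    Diag a b → Diag a c → Diag a d → (b = c ∨ b = d ∨ c = d))

def av (v : ℤ × ℤ) : ℤ := v.1 + v.2
def bv (v : ℤ × ℤ) : ℤ := v.1 - v.2

lemma md_le_iff (u v : ℤ × ℤ) (n : ℕ) :
    md u v ≤ n ↔ (av u - av v).natAbs ≤ n ∧ (bv u - bv v).natAbs ≤ n := by
  simp only [md, av, bv]; omega

lemma exists_minmax (R : Finset (ℤ × ℤ)) (hR : R.Nonempty) : ∃ v, IsMinMax R v := by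
  obtain ⟨u0, hu0⟩ := hR
  set e : ℕ := ecc R u0 with he
  set T : Finset (ℤ × ℤ) :=
    Finset.Icc (u0.1 - e, u0.2 - e) (u0.1 + e, u0.2 + e) with hT
  have hmemT : u0 ∈ T := by
    simp only [hT, Finset.mem_Icc, Prod.le_def]
    constructor <;> constructor <;> omega
  obtain ⟨w, hwT, hwmin⟩ := T.exists_min_image (ecc R) ⟨u0, hmemT⟩
  refine ⟨w, fun v' => ?_⟩
  by_cases hv' : v' ∈ T
  · exact hwmin v' hv'
  · have h1 : ecc R w ≤ e := hwmin u0 hmemT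
    have h2 : md u0 v' ≤ ecc R v' := Finset.le_sup (f := fun u => md u v') hu0
    have h3 : ¬ (md u0 v' ≤ e) := by
      intro hc
      apply hv'
      simp only [md] at hc
      simp only [hT, Finset.mem_Icc, Prod.le_def]
      constructor <;> constructor <;> omega
    omega

lemma char (R : Finset (ℤ × ℤ)) (hR : R.Nonempty) :
    ∃ (v0 : ℤ × ℤ) (lA uA lB uB : ℤ), IsMinMax R v0 ∧
      ∀ v : ℤ × ℤ, (IsMinMax R v ↔ lA ≤ av v ∧ av v ≤ uA ∧ lB ≤ bv v ∧ bv v ≤ uB) := by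
  obtain ⟨v0, hv0⟩ := exists_minmax R hR
  set r : ℕ := ecc R v0 with hr
  set aMax : ℤ := (R.image av).max' (hR.image av) with haMax
  set aMin : ℤ := (R.image av).min' (hR.image av) with haMin
  set bMax : ℤ := (R.image bv).max' (hR.image bv) with hbMax
  set bMin : ℤ := (R.image bv).min' (hR.image bv) with hbMin
  have hle : ∀ (v : ℤ × ℤ) (n : ℕ), ecc R v ≤ n ↔
      (aMax - av v ≤ (n : ℤ) ∧ av v - aMin ≤ (n : ℤ) ∧
       bMax - bv v ≤ (n : ℤ) ∧ bv v - bMin ≤ (n : ℤ)) := by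
    intro v n
    rw [show ecc R v = R.sup (fun u => md u v) from rfl, Finset.sup_le_iff]
    constructor
    · intro h
      obtain ⟨u1, hu1, he1⟩ := Finset.mem_image.mp ((R.image av).max'_mem (hR.image av))
      obtain ⟨u2, hu2, he2⟩ := Finset.mem_image.mp ((R.image av).min'_mem (hR.image av))
      obtain ⟨u3, hu3, he3⟩ := Finset.mem_image.mp ((R.image bv).max'_mem (hR.image bv))
      obtain ⟨u4, hu4, he4⟩ := Finset.mem_image.mp ((R.image bv).min'_mem (hR.image bv))
      have m1 := (md_le_iff u1 v n).mp (h u1 hu1)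
      have m2 := (md_le_iff u2 v n).mp (h u2 hu2)
      have m3 := (md_le_iff u3 v n).mp (h u3 hu3)
      have m4 := (md_le_iff u4 v n).mp (h u4 hu4)
      rw [← haMax] at he1
      rw [← haMin] at he2
      rw [← hbMax] at he3
      rw [← hbMin] at he4
      refine ⟨?_, ?_, ?_, ?_⟩ <;> omega
    · intro hb u hu
      rw [md_le_iff]
      have l1 : av u ≤ aMax := Finset.le_max' _ _ (Finset.mem_image_of_mem av hu)
      have l2 : aMin ≤ av u := Finset.min'_le _ _ (Finset.mem_image_of_mem av hu)
      have l3 : bv u ≤ bMax := Finset.le_max' _ _ (Finset.mem_image_of_mem bv hu)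
      have l4 : bMin ≤ bv u := Finset.min'_le _ _ (Finset.mem_image_of_mem bv hu)
      omega
  refine ⟨v0, aMax - r, aMin + r, bMax - r, bMin + r, hv0, fun v => ?_⟩
  constructor
  · intro hv
    have h1 : ecc R v ≤ r := hv v0
    have := (hle v r).mp h1
    omega
  · intro hbox
    intro v'
    have h1 : ecc R v ≤ r := (hle v r).mpr (by omega)
    exact h1.trans (hv0 v')

lemma av_sub_bv (v : ℤ × ℤ) : av v - bv v = 2 * v.2 := by simp [av, bv]; ring
lemma av_add_bv (v : ℤ × ℤ) : av v + bv v = 2 * v.1 := by simp [av, bv]; ring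

lemma connected_singleton (R : Finset (ℤ × ℤ)) (v0 : ℤ × ℤ) (hv0 : IsMinMax R v0)
    (h : ∀ v, IsMinMax R v → v = v0) : (GM R).Connected := by
  rw [SimpleGraph.connected_iff]
  refine ⟨fun p q => ?_, ⟨⟨v0, hv0⟩⟩⟩
  have : p = q := Subtype.ext ((h _ p.2).trans (h _ q.2).symm)
  rw [this]

lemma connected_box (R : Finset (ℤ × ℤ)) (v0 : ℤ × ℤ) (lA uA lB uB : ℤ)
    (hchar : ∀ v : ℤ × ℤ, (IsMinMax R v ↔ lA ≤ av v ∧ av v ≤ uA ∧ lB ≤ bv v ∧ bv v ≤ uB))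
    (hv0 : IsMinMax R v0) (hA : lA < uA) (hB : lB < uB) : (GM R).Connected := by
  rw [SimpleGraph.connected_iff]
  refine ⟨?_, ⟨⟨v0, hv0⟩⟩⟩
  have key : ∀ n : ℕ, ∀ p q : {v : ℤ × ℤ // IsMinMax R v},
      (av p.1 - av q.1).natAbs ≤ n → (bv p.1 - bv q.1).natAbs ≤ n →
      (GM R).Reachable p q := by
    intro n
    induction n with
    | zero =>
      intro p q h1 h2
      have hp := av_add_bv p.1; have hq := av_add_bv q.1
      have hp' := av_sub_bv p.1; have hq' := av_sub_bv q.1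
      have : p = q := Subtype.ext (Prod.ext (by omega) (by omega))
      rw [this]
    | succ n IH =>
      intro p q h1 h2
      by_cases hle : (av p.1 - av q.1).natAbs ≤ n ∧ (bv p.1 - bv q.1).natAbs ≤ n
      · exact IH p q hle.1 hle.2
      · push_neg at hle
        have hp := av_sub_bv p.1
        have hq := av_sub_bv q.1
        have boxp := (hchar p.1).mp p.2
        have boxq := (hchar q.1).mp q.2
        have go : ∀ w : ℤ × ℤ, md p.1 w = 1 →
            (lA ≤ av w ∧ av w ≤ uA ∧ lB ≤ bv w ∧ bv w ≤ uB) →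
            (av w - av q.1).natAbs ≤ n → (bv w - bv q.1).natAbs ≤ n →
            (GM R).Reachable p q := by
          intro w hmd hbox hb1 hb2
          exact (SimpleGraph.Adj.reachable
            (show (GM R).Adj p ⟨w, (hchar w).mpr hbox⟩ from hmd)).trans
            (IH ⟨w, (hchar w).mpr hbox⟩ q hb1 hb2)
        have hdA : ∃ dA : ℤ, (dA = 1 ∨ dA = -1) ∧ lA ≤ av p.1 + dA ∧
            av p.1 + dA ≤ uA ∧ (av p.1 + dA - av q.1).natAbs ≤ n := by
          rcases lt_trichotomy (av p.1) (av q.1) with h | h | h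
          · exact ⟨1, Or.inl rfl, by omega, by omega, by omega⟩
          · by_cases hu : av p.1 + 1 ≤ uA
            · exact ⟨1, Or.inl rfl, by omega, by omega, by omega⟩
            · exact ⟨-1, Or.inr rfl, by omega, by omega, by omega⟩
          · exact ⟨-1, Or.inr rfl, by omega, by omega, by omega⟩
        have hdB : ∃ dB : ℤ, (dB = 1 ∨ dB = -1) ∧ lB ≤ bv p.1 + dB ∧
            bv p.1 + dB ≤ uB ∧ (bv p.1 + dB - bv q.1).natAbs ≤ n := by
          rcases lt_trichotomy (bv p.1) (bv q.1) with h | h | h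
          · exact ⟨1, Or.inl rfl, by omega, by omega, by omega⟩
          · by_cases hu : bv p.1 + 1 ≤ uB
            · exact ⟨1, Or.inl rfl, by omega, by omega, by omega⟩
            · exact ⟨-1, Or.inr rfl, by omega, by omega, by omega⟩
          · exact ⟨-1, Or.inr rfl, by omega, by omega, by omega⟩
        obtain ⟨dA, hdA1, hdA2, hdA3, hdA4⟩ := hdA
        obtain ⟨dB, hdB1, hdB2, hdB3, hdB4⟩ := hdB
        rcases hdA1 with rfl | rfl <;> rcases hdB1 with rfl | rfl
        · -- (1,1) : w = (x+1, y)
          refine go (p.1.1 + 1, p.1.2) ?_ ?_ ?_ ?_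
          · simp only [md]; omega
          all_goals
            have e1 : av (p.1.1 + 1, p.1.2) = av p.1 + 1 := by simp [av]; ring
            have e2 : bv (p.1.1 + 1, p.1.2) = bv p.1 + 1 := by simp [bv]; ring
          · refine ⟨by omega, by omega, by omega, by omega⟩
          · omega
          · omega
        · -- (1,-1) : w = (x, y+1)
          refine go (p.1.1, p.1.2 + 1) ?_ ?_ ?_ ?_
          · simp only [md]; omega
          all_goals
            have e1 : av (p.1.1, p.1.2 + 1) = av p.1 + 1 := by simp [av]; ring
            have e2 : bv (p.1.1, p.1.2 + 1) = bv p.1 - 1 := by simp [bv]; ring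
          · refine ⟨by omega, by omega, by omega, by omega⟩
          · omega
          · omega
        · -- (-1,1) : w = (x, y-1)
          refine go (p.1.1, p.1.2 - 1) ?_ ?_ ?_ ?_
          · simp only [md]; omega
          all_goals
            have e1 : av (p.1.1, p.1.2 - 1) = av p.1 - 1 := by simp [av]; ring
            have e2 : bv (p.1.1, p.1.2 - 1) = bv p.1 + 1 := by simp [bv]; ring
          · refine ⟨by omega, by omega, by omega, by omega⟩
          · omega
          · omega
        · -- (-1,-1) : w = (x-1, y)
          refine go (p.1.1 - 1, p.1.2) ?_ ?_ ?_ ?_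
          · simp only [md]; omega
          all_goals
            have e1 : av (p.1.1 - 1, p.1.2) = av p.1 - 1 := by simp [av]; ring
            have e2 : bv (p.1.1 - 1, p.1.2) = bv p.1 - 1 := by simp [bv]; ring
          · refine ⟨by omega, by omega, by omega, by omega⟩
          · omega
          · omega
  intro p q
  exact key ((av p.1 - av q.1).natAbs ⊔ (bv p.1 - bv q.1).natAbs) p q le_sup_left le_sup_right

lemma stepA (S : Set (ℤ × ℤ)) (v0 : ℤ × ℤ) (A0 lB uB : ℤ) (hv0 : v0 ∈ S)
    (hmem : ∀ v : ℤ × ℤ, v ∈ S ↔ av v = A0 ∧ lB ≤ bv v ∧ bv v ≤ uB)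
    (hsp : bv v0 + 2 ≤ uB ∨ lB ≤ bv v0 - 2) :
    DisconnectedStepGraph S := by
  have hv0' := (hmem v0).mp hv0
  have unf : ∀ v : ℤ × ℤ, av v = v.1 + v.2 ∧ bv v = v.1 - v.2 := fun v => ⟨rfl, rfl⟩
  refine ⟨?_, ?_, ?_, ?_⟩
  · rcases hsp with h | h
    · refine ⟨v0, hv0, (v0.1 + 1, v0.2 - 1), (hmem _).mpr ?_, ?_⟩
      · have := unf (v0.1 + 1, v0.2 - 1); have := unf v0
        simp only [av, bv] at *; constructor <;> [omega; constructor <;> omega]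
      · intro hc
        rw [Prod.ext_iff] at hc
        simp only [] at hc
        omega
    · refine ⟨v0, hv0, (v0.1 - 1, v0.2 + 1), (hmem _).mpr ?_, ?_⟩
      · simp only [av, bv] at *; constructor <;> [omega; constructor <;> omega]
      · intro hc
        rw [Prod.ext_iff] at hc
        simp only [] at hc
        omega
  · intro a ha b hb hne
    have ha' := (hmem a).mp ha
    have hb' := (hmem b).mp hb
    simp only [av, bv] at ha' hb'
    constructor
    · intro h; exact hne (Prod.ext h (by omega))
    · intro h; exact hne (Prod.ext (by omega) h)
  · intro v hv
    have hv' := (hmem v).mp hv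
    have p1 : av v - bv v = 2 * v.2 := by simp [av, bv]; ring
    have p2 : av v0 - bv v0 = 2 * v0.2 := by simp [av, bv]; ring
    by_cases hc : bv v + 2 ≤ uB
    · refine ⟨(v.1 + 1, v.2 - 1), (hmem _).mpr ?_, ?_, ?_⟩
      · simp only [av, bv] at *; refine ⟨by omega, by omega, by omega⟩
      · simp
      · simp
    · refine ⟨(v.1 - 1, v.2 + 1), (hmem _).mpr ?_, ?_, ?_⟩
      · simp only [av, bv] at *; refine ⟨by omega, by omega, by omega⟩
      · simp
      · simp
  · intro a ha b hb c hc d hd hab hac had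
    have ha' := (hmem a).mp ha
    have hb' := (hmem b).mp hb
    have hc' := (hmem c).mp hc
    have hd' := (hmem d).mp hd
    simp only [av, bv] at ha' hb' hc' hd'
    obtain ⟨hab1, hab2⟩ := hab
    obtain ⟨hac1, hac2⟩ := hac
    obtain ⟨had1, had2⟩ := had
    have hb2 : (b.1 = a.1 + 1 ∧ b.2 = a.2 - 1) ∨ (b.1 = a.1 - 1 ∧ b.2 = a.2 + 1) := by omega
    have hc2 : (c.1 = a.1 + 1 ∧ c.2 = a.2 - 1) ∨ (c.1 = a.1 - 1 ∧ c.2 = a.2 + 1) := by omega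
    have hd2 : (d.1 = a.1 + 1 ∧ d.2 = a.2 - 1) ∨ (d.1 = a.1 - 1 ∧ d.2 = a.2 + 1) := by omega
    rcases hb2 with ⟨e1, e2⟩ | ⟨e1, e2⟩ <;> rcases hc2 with ⟨e3, e4⟩ | ⟨e3, e4⟩ <;>
      rcases hd2 with ⟨e5, e6⟩ | ⟨e5, e6⟩ <;>
      simp [Prod.ext_iff] <;> omega

lemma stepB (S : Set (ℤ × ℤ)) (v0 : ℤ × ℤ) (B0 lA uA : ℤ) (hv0 : v0 ∈ S)
    (hmem : ∀ v : ℤ × ℤ, v ∈ S ↔ bv v = B0 ∧ lA ≤ av v ∧ av v ≤ uA)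
    (hsp : av v0 + 2 ≤ uA ∨ lA ≤ av v0 - 2) :
    DisconnectedStepGraph S := by
  have hv0' := (hmem v0).mp hv0
  refine ⟨?_, ?_, ?_, ?_⟩
  · rcases hsp with h | h
    · refine ⟨v0, hv0, (v0.1 + 1, v0.2 + 1), (hmem _).mpr ?_, ?_⟩
      · simp only [av, bv] at *; refine ⟨by omega, by omega, by omega⟩
      · intro hc
        rw [Prod.ext_iff] at hc
        simp only [] at hc
        omega
    · refine ⟨v0, hv0, (v0.1 - 1, v0.2 - 1), (hmem _).mpr ?_, ?_⟩
      · simp only [av, bv] at *; refine ⟨by omega, by omega, by omega⟩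
      · intro hc
        rw [Prod.ext_iff] at hc
        simp only [] at hc
        omega
  · intro a ha b hb hne
    have ha' := (hmem a).mp ha
    have hb' := (hmem b).mp hb
    simp only [av, bv] at ha' hb'
    constructor
    · intro h; exact hne (Prod.ext h (by omega))
    · intro h; exact hne (Prod.ext (by omega) h)
  · intro v hv
    have hv' := (hmem v).mp hv
    have p1 : av v + bv v = 2 * v.1 := by simp [av, bv]; ring
    have p2 : av v0 + bv v0 = 2 * v0.1 := by simp [av, bv]; ring
    by_cases hc : av v + 2 ≤ uA
    · refine ⟨(v.1 + 1, v.2 + 1), (hmem _).mpr ?_, ?_, ?_⟩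
      · simp only [av, bv] at *; refine ⟨by omega, by omega, by omega⟩
      · simp
      · simp
    · refine ⟨(v.1 - 1, v.2 - 1), (hmem _).mpr ?_, ?_, ?_⟩
      · simp only [av, bv] at *; refine ⟨by omega, by omega, by omega⟩
      · simp
      · simp
  · intro a ha b hb c hc d hd hab hac had
    have ha' := (hmem a).mp ha
    have hb' := (hmem b).mp hb
    have hc' := (hmem c).mp hc
    have hd' := (hmem d).mp hd
    simp only [av, bv] at ha' hb' hc' hd'
    obtain ⟨hab1, hab2⟩ := hab
    obtain ⟨hac1, hac2⟩ := hac
    obtain ⟨had1, had2⟩ := had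
    have hb2 : (b.1 = a.1 + 1 ∧ b.2 = a.2 + 1) ∨ (b.1 = a.1 - 1 ∧ b.2 = a.2 - 1) := by omega
    have hc2 : (c.1 = a.1 + 1 ∧ c.2 = a.2 + 1) ∨ (c.1 = a.1 - 1 ∧ c.2 = a.2 - 1) := by omega
    have hd2 : (d.1 = a.1 + 1 ∧ d.2 = a.2 + 1) ∨ (d.1 = a.1 - 1 ∧ d.2 = a.2 - 1) := by omega
    rcases hb2 with ⟨e1, e2⟩ | ⟨e1, e2⟩ <;> rcases hc2 with ⟨e3, e4⟩ | ⟨e3, e4⟩ <;>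
      rcases hd2 with ⟨e5, e6⟩ | ⟨e5, e6⟩ <;>
      simp [Prod.ext_iff] <;> omega


/-- If `G_M(R)` is disconnected, then `V_M(R)` is a disconnected
step-graph. -/
theorem stmt_15 (R : Finset (ℤ × ℤ)) (hR : R.Nonempty)
    (hdis : ¬ (GM R).Connected) :
    DisconnectedStepGraph {v : ℤ × ℤ | IsMinMax R v} := by
  obtain ⟨v0, lA, uA, lB, uB, hv0, hchar⟩ := char R hR
  have box0 := (hchar v0).mp hv0
  have p2 : av v0 - bv v0 = 2 * v0.2 := by simp [av, bv]; ring
  have q2 : av v0 + bv v0 = 2 * v0.1 := by simp [av, bv]; ring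
  by_cases hA : lA < uA
  · by_cases hB : lB < uB
    · exact absurd (connected_box R v0 lA uA lB uB hchar hv0 hA hB) hdis
    · by_cases hsp : av v0 + 2 ≤ uA ∨ lA ≤ av v0 - 2
      · refine stepB {v | IsMinMax R v} v0 (bv v0) lA uA hv0 (fun v => ?_) hsp
        rw [Set.mem_setOf_eq, hchar v]
        omega
      · refine absurd (connected_singleton R v0 hv0 (fun v hv => ?_)) hdis
        have bx := (hchar v).mp hv
        have p1 : av v - bv v = 2 * v.2 := by simp [av, bv]; ring
        have q1 : av v + bv v = 2 * v.1 := by simp [av, bv]; ring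
        exact Prod.ext (by omega) (by omega)
  · by_cases hsp : bv v0 + 2 ≤ uB ∨ lB ≤ bv v0 - 2
    · refine stepA {v | IsMinMax R v} v0 (av v0) lB uB hv0 (fun v => ?_) hsp
      rw [Set.mem_setOf_eq, hchar v]
      omega
    · refine absurd (connected_singleton R v0 hv0 (fun v hv => ?_)) hdis
      have bx := (hchar v).mp hv
      have p1 : av v - bv v = 2 * v.2 := by simp [av, bv]; ring
      have q1 : av v + bv v = 2 * v.1 := by simp [av, bv]; ring
      exact Prod.ext (by omega) (by omega)
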